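/- Let H be a Hopf algebra over a field k with bijective antipode S and χ : H⊗H → k a unital 2-cocycle. Define U : H → k by U(h) = χ(h₁ ⊗ S h₂) and suppose V : H → k is a convolution inverse of U, i.e. U(h₁)V(h₂) = ε(h) = V(h₁)U(h₂) for all h ∈ H. Then for all a, h ∈ H: χ(a·h₁ ⊗ S h₂)·V(h₃) = χ⁻¹(a ⊗ h). -/

import Mathlib

open scoped TensorProduct
open TensorProduct LinearMap

namespace PaperTwist

variable (k H : Type) [Field k] [Ring H] [HopfAlgebra k H]

/-- The comultiplication of `H`. -/
noncomputable def Δ : H →ₗ[k] H ⊗[k] H := Coalgebra.comul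

/-- The twofold iterated comultiplication `h ↦ h₁ ⊗ (h₂ ⊗ h₃)`. -/
noncomputable def Δ₂ : H →ₗ[k] H ⊗[k] (H ⊗[k] H) := (LinearMap.lTensor H (Δ k H)) ∘ₗ (Δ k H)

/-- The counit of `H`. -/
noncomputable def ε : H →ₗ[k] k := Coalgebra.counit

/-- The antipode of `H`. -/
noncomputable def S : H →ₗ[k] H := HopfAlgebra.antipode k

/-- `χ : H ⊗ H → k` is a unital 2-cocycle with convolution inverse `χ'`:
`χ(h₁⊗g₁)χ⁻¹(h₂⊗g₂) = ε(h)ε(g) = χ⁻¹(h₁⊗g₁)χ(h₂⊗g₂)`,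
`χ(g₁⊗f₁)χ(h⊗g₂f₂) = χ(h₁⊗g₁)χ(h₂g₂⊗f)` and `χ(1⊗h) = ε(h) = χ(h⊗1)`,
all Sweedler sums being expressed via arbitrary finite representations of coproducts. -/
def IsFunCocycle (χ χ' : H ⊗[k] H →ₗ[k] k) : Prop :=
  (∀ (h g : H) (ι κ : Type) (s : Finset ι) (t : Finset κ) (h1 h2 : ι → H) (g1 g2 : κ → H),
    Δ k H h = ∑ i ∈ s, h1 i ⊗ₜ[k] h2 i → Δ k H g = ∑ j ∈ t, g1 j ⊗ₜ[k] g2 j →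
    ((∑ i ∈ s, ∑ j ∈ t, χ (h1 i ⊗ₜ[k] g1 j) * χ' (h2 i ⊗ₜ[k] g2 j) = ε k H h * ε k H g) ∧
     (∑ i ∈ s, ∑ j ∈ t, χ' (h1 i ⊗ₜ[k] g1 j) * χ (h2 i ⊗ₜ[k] g2 j) = ε k H h * ε k H g))) ∧
  (∀ (h g f : H) (ι κ μ : Type) (s : Finset ι) (t : Finset κ) (u : Finset μ)
      (h1 h2 : ι → H) (g1 g2 : κ → H) (f1 f2 : μ → H),
    Δ k H h = ∑ i ∈ s, h1 i ⊗ₜ[k] h2 i → Δ k H g = ∑ j ∈ t, g1 j ⊗ₜ[k] g2 j →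
    Δ k H f = ∑ l ∈ u, f1 l ⊗ₜ[k] f2 l →
    ∑ j ∈ t, ∑ l ∈ u, χ (g1 j ⊗ₜ[k] f1 l) * χ (h ⊗ₜ[k] (g2 j * f2 l))
      = ∑ i ∈ s, ∑ j ∈ t, χ (h1 i ⊗ₜ[k] g1 j) * χ ((h2 i * g2 j) ⊗ₜ[k] f)) ∧
  (∀ h : H, χ ((1 : H) ⊗ₜ[k] h) = ε k H h ∧ χ (h ⊗ₜ[k] (1 : H)) = ε k H h)

end PaperTwist

open PaperTwist

namespace StTen

open Coalgebra

section ConvFramework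

variable {k C A : Type} [Field k]
  [AddCommGroup C] [Module k C] [Coalgebra k C]
  [Ring A] [Algebra k A]

noncomputable def conv (f g : C →ₗ[k] A) : C →ₗ[k] A :=
  LinearMap.mul' k A ∘ₗ TensorProduct.map f g ∘ₗ Coalgebra.comul

noncomputable def convUnit : C →ₗ[k] A :=
  Algebra.linearMap k A ∘ₗ Coalgebra.counit

lemma convUnit_apply (c : C) :
    (convUnit : C →ₗ[k] A) c = algebraMap k A (Coalgebra.counit c) := rfl

lemma conv_apply_repr (f g : C →ₗ[k] A) (c : C) (r : Coalgebra.Repr k c (C × C)) :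
    conv f g c = ∑ i ∈ r.index, f (r.left i) * g (r.right i) := by
  rw [conv, LinearMap.comp_apply, LinearMap.comp_apply, ← r.eq]
  simp

lemma convUnit_conv (f : C →ₗ[k] A) : conv convUnit f = f := by
  have h1 : TensorProduct.map (convUnit : C →ₗ[k] A) f
      = TensorProduct.map (Algebra.linearMap k A) f
          ∘ₗ LinearMap.rTensor C (Coalgebra.counit (R := k)) := by
    ext x y; simp [convUnit]
  apply LinearMap.ext; intro c
  rw [conv, LinearMap.comp_apply, LinearMap.comp_apply, h1, LinearMap.comp_apply,
    Coalgebra.rTensor_counit_comul]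
  simp

lemma conv_convUnit (f : C →ₗ[k] A) : conv f convUnit = f := by
  have h1 : TensorProduct.map f (convUnit : C →ₗ[k] A)
      = TensorProduct.map f (Algebra.linearMap k A)
          ∘ₗ LinearMap.lTensor C (Coalgebra.counit (R := k)) := by
    ext x y; simp [convUnit]
  apply LinearMap.ext; intro c
  rw [conv, LinearMap.comp_apply, LinearMap.comp_apply, h1, LinearMap.comp_apply,
    Coalgebra.lTensor_counit_comul]
  simp

lemma conv_assoc (f g w : C →ₗ[k] A) : conv (conv f g) w = conv f (conv g w) := by
  have e1 : TensorProduct.map (conv f g) w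
      = TensorProduct.map (LinearMap.mul' k A ∘ₗ TensorProduct.map f g) w
          ∘ₗ (Coalgebra.comul (R := k) (A := C)).rTensor C := by
    ext x y; simp [conv]
  have e2 : TensorProduct.map f (conv g w)
      = TensorProduct.map f (LinearMap.mul' k A ∘ₗ TensorProduct.map g w)
          ∘ₗ (Coalgebra.comul (R := k) (A := C)).lTensor C := by
    ext x y; simp [conv]
  have e3 : (LinearMap.mul' k A ∘ₗ
        TensorProduct.map f (LinearMap.mul' k A ∘ₗ TensorProduct.map g w))
        ∘ₗ (TensorProduct.assoc k C C C).toLinearMap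
      = LinearMap.mul' k A ∘ₗ
          TensorProduct.map (LinearMap.mul' k A ∘ₗ TensorProduct.map f g) w := by
    ext x y z; simp [mul_assoc]
  apply LinearMap.ext; intro c
  have h3 := LinearMap.congr_fun e3
    (((Coalgebra.comul (R := k) (A := C)).rTensor C) (Coalgebra.comul c))
  simp only [LinearMap.comp_apply, LinearEquiv.coe_coe] at h3
  rw [Coalgebra.coassoc_apply] at h3
  have lhs : conv (conv f g) w c
      = (LinearMap.mul' k A) ((TensorProduct.map (conv f g) w) (Coalgebra.comul c)) := rfl
  have rhs : conv f (conv g w) c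
      = (LinearMap.mul' k A) ((TensorProduct.map f (conv g w)) (Coalgebra.comul c)) := rfl
  rw [lhs, rhs, e1, e2, LinearMap.comp_apply, LinearMap.comp_apply]
  exact h3.symm

lemma conv_left_cancel (f g g' : C →ₗ[k] A)
    (h1 : conv g f = convUnit) (h2 : conv f g' = convUnit) : g = g' := by
  have h := conv_assoc g f g'
  rw [h1, h2, convUnit_conv, conv_convUnit] at h
  exact h.symm

end ConvFramework

section Hopf

variable {k H : Type} [Field k] [Ring H] [HopfAlgebra k H]

lemma Δ_eq : Δ k H = (Coalgebra.comul : H →ₗ[k] H ⊗[k] H) := rfl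
lemma ε_eq : ε k H = (Coalgebra.counit : H →ₗ[k] k) := rfl
lemma S_eq : S k H = (HopfAlgebra.antipode k : H →ₗ[k] H) := rfl
lemma Δ₂_eq : Δ₂ k H
    = LinearMap.lTensor H (Coalgebra.comul (R := k) (A := H)) ∘ₗ Coalgebra.comul := rfl

lemma coassoc' : (TensorProduct.assoc k H H H).toLinearMap
      ∘ₗ (Coalgebra.comul (R := k) (A := H)).rTensor H ∘ₗ Coalgebra.comul = Δ₂ k H := by
  rw [Δ₂_eq]; exact Coalgebra.coassoc

lemma expand_left (c : H) (rc : Coalgebra.Repr k c (H × H))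
    (rL : ∀ i : (H × H), Coalgebra.Repr k (rc.left i) (H × H)) :
    Δ₂ k H c = ∑ i ∈ rc.index, ∑ j ∈ (rL i).index,
      (rL i).left j ⊗ₜ[k] ((rL i).right j ⊗ₜ[k] rc.right i) := by
  have h0 : Δ₂ k H c
      = TensorProduct.assoc k H H H
          ((Coalgebra.comul (R := k) (A := H)).rTensor H (Coalgebra.comul c)) := by
    rw [Δ₂_eq, LinearMap.comp_apply, Coalgebra.coassoc_apply]
  rw [h0, ← rc.eq, map_sum, map_sum]
  refine Finset.sum_congr rfl fun i _ => ?_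
  rw [LinearMap.rTensor_tmul, ← (rL i).eq]
  simp [TensorProduct.sum_tmul]

lemma expand_right (c : H) (rc : Coalgebra.Repr k c (H × H))
    (rR : ∀ i : (H × H), Coalgebra.Repr k (rc.right i) (H × H)) :
    Δ₂ k H c = ∑ i ∈ rc.index, ∑ j ∈ (rR i).index,
      rc.left i ⊗ₜ[k] ((rR i).left j ⊗ₜ[k] (rR i).right j) := by
  rw [Δ₂_eq, LinearMap.comp_apply, ← rc.eq, map_sum]
  refine Finset.sum_congr rfl fun i _ => ?_
  rw [LinearMap.lTensor_tmul, ← (rR i).eq]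
  simp [TensorProduct.tmul_sum]

-- composition identities
lemma P1 : (TensorProduct.assoc k H H (H ⊗[k] H)).toLinearMap
      ∘ₗ (Coalgebra.comul (R := k) (A := H)).lTensor (H ⊗[k] H)
      ∘ₗ (TensorProduct.assoc k H H H).symm.toLinearMap
    = LinearMap.lTensor H (LinearMap.lTensor H (Coalgebra.comul (R := k) (A := H))) := by
  apply TensorProduct.ext'
  intro x yz
  induction yz using TensorProduct.induction_on with
  | zero => simp only [TensorProduct.tmul_zero, LinearMap.map_zero]
  | tmul y z => simp
  | add u v hu hv => simp only [TensorProduct.tmul_add, map_add, hu, hv]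

lemma rTensor_comul_comul :
    (Coalgebra.comul (R := k) (A := H)).rTensor H ∘ₗ Coalgebra.comul
      = (TensorProduct.assoc k H H H).symm.toLinearMap ∘ₗ Δ₂ k H := by
  apply LinearMap.ext; intro c
  rw [LinearMap.comp_apply, LinearMap.comp_apply, Δ₂_eq, LinearMap.comp_apply]
  exact (Coalgebra.coassoc_symm_apply c).symm

lemma mapΔΔ : (TensorProduct.assoc k H H (H ⊗[k] H)).toLinearMap
      ∘ₗ TensorProduct.map (Coalgebra.comul (R := k) (A := H)) Coalgebra.comul
      ∘ₗ Coalgebra.comul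
    = LinearMap.lTensor H (Δ₂ k H) ∘ₗ Coalgebra.comul := by
  have hdec : TensorProduct.map (Coalgebra.comul (R := k) (A := H)) Coalgebra.comul
      = (Coalgebra.comul (R := k) (A := H)).lTensor (H ⊗[k] H)
          ∘ₗ (Coalgebra.comul (R := k) (A := H)).rTensor H :=
    (LinearMap.lTensor_comp_rTensor H _ _).symm
  calc (TensorProduct.assoc k H H (H ⊗[k] H)).toLinearMap
      ∘ₗ TensorProduct.map (Coalgebra.comul (R := k) (A := H)) Coalgebra.comul
      ∘ₗ Coalgebra.comul
      = (TensorProduct.assoc k H H (H ⊗[k] H)).toLinearMap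
          ∘ₗ (Coalgebra.comul (R := k) (A := H)).lTensor (H ⊗[k] H)
          ∘ₗ ((Coalgebra.comul (R := k) (A := H)).rTensor H ∘ₗ Coalgebra.comul) := by
        rw [hdec]; try rfl
    _ = ((TensorProduct.assoc k H H (H ⊗[k] H)).toLinearMap
          ∘ₗ (Coalgebra.comul (R := k) (A := H)).lTensor (H ⊗[k] H)
          ∘ₗ (TensorProduct.assoc k H H H).symm.toLinearMap) ∘ₗ Δ₂ k H := by
        rw [rTensor_comul_comul]; try rfl
    _ = LinearMap.lTensor H (LinearMap.lTensor H (Coalgebra.comul (R := k) (A := H)))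
          ∘ₗ Δ₂ k H := by rw [← P1]; try rfl
    _ = LinearMap.lTensor H (Δ₂ k H) ∘ₗ Coalgebra.comul := by
        rw [Δ₂_eq, LinearMap.lTensor_comp]; try rfl

lemma D4_eq_B : LinearMap.lTensor H (Δ₂ k H) ∘ₗ Coalgebra.comul
    = LinearMap.lTensor H (LinearMap.lTensor H (Coalgebra.comul (R := k) (A := H)))
        ∘ₗ Δ₂ k H := by
  rw [Δ₂_eq, LinearMap.lTensor_comp]; try rfl

lemma D4_eq_C : LinearMap.lTensor H (Δ₂ k H) ∘ₗ Coalgebra.comul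
    = LinearMap.lTensor H ((TensorProduct.assoc k H H H).toLinearMap
        ∘ₗ (Coalgebra.comul (R := k) (A := H)).rTensor H) ∘ₗ Δ₂ k H := by
  calc LinearMap.lTensor H (Δ₂ k H) ∘ₗ Coalgebra.comul
      = LinearMap.lTensor H ((TensorProduct.assoc k H H H).toLinearMap
          ∘ₗ (Coalgebra.comul (R := k) (A := H)).rTensor H ∘ₗ Coalgebra.comul)
          ∘ₗ Coalgebra.comul := by rw [coassoc']
    _ = (LinearMap.lTensor H ((TensorProduct.assoc k H H H).toLinearMap
          ∘ₗ (Coalgebra.comul (R := k) (A := H)).rTensor H)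
          ∘ₗ LinearMap.lTensor H (Coalgebra.comul (R := k) (A := H)))
          ∘ₗ Coalgebra.comul := by
        rw [← LinearMap.lTensor_comp]; try rfl
    _ = LinearMap.lTensor H ((TensorProduct.assoc k H H H).toLinearMap
          ∘ₗ (Coalgebra.comul (R := k) (A := H)).rTensor H) ∘ₗ Δ₂ k H := by
        rw [Δ₂_eq]; try rfl

lemma D4_form_A (h : H) (r : Coalgebra.Repr k h (H × H))
    (rg : ∀ p : (H × H), Coalgebra.Repr k (r.left p) (H × H))
    (rw' : ∀ p : (H × H), Coalgebra.Repr k (r.right p) (H × H)) :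
    (LinearMap.lTensor H (Δ₂ k H) ∘ₗ Coalgebra.comul) h
      = ∑ p ∈ r.index, ∑ q ∈ (rg p).index, ∑ t ∈ (rw' p).index,
          (rg p).left q ⊗ₜ[k] ((rg p).right q ⊗ₜ[k]
            ((rw' p).left t ⊗ₜ[k] (rw' p).right t)) := by
  rw [D4_eq_B, LinearMap.comp_apply, expand_left h r rg, map_sum]
  refine Finset.sum_congr rfl fun p _ => ?_
  rw [map_sum]
  refine Finset.sum_congr rfl fun q _ => ?_
  rw [LinearMap.lTensor_tmul, LinearMap.lTensor_tmul, ← (rw' p).eq]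
  simp [TensorProduct.tmul_sum]

lemma D4_form_B (h : H) (r : Coalgebra.Repr k h (H × H))
    (rg : ∀ p : (H × H), Coalgebra.Repr k (r.left p) (H × H))
    (ry : ∀ p : (H × H), ∀ q : (H × H), Coalgebra.Repr k ((rg p).right q) (H × H)) :
    (LinearMap.lTensor H (Δ₂ k H) ∘ₗ Coalgebra.comul) h
      = ∑ p ∈ r.index, ∑ q ∈ (rg p).index, ∑ n ∈ (ry p q).index,
          (rg p).left q ⊗ₜ[k] ((ry p q).left n ⊗ₜ[k]
            ((ry p q).right n ⊗ₜ[k] r.right p)) := by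
  rw [D4_eq_C, LinearMap.comp_apply, expand_left h r rg, map_sum]
  refine Finset.sum_congr rfl fun p _ => ?_
  rw [map_sum]
  refine Finset.sum_congr rfl fun q _ => ?_
  rw [LinearMap.lTensor_tmul, LinearMap.comp_apply, LinearMap.rTensor_tmul,
    ← (ry p q).eq]
  simp [TensorProduct.sum_tmul, TensorProduct.tmul_sum]

lemma D4_form_Y1 (h : H) (r : Coalgebra.Repr k h (H × H))
    (rw' : ∀ p : (H × H), Coalgebra.Repr k (r.right p) (H × H))
    (rz : ∀ p : (H × H), ∀ t : (H × H), Coalgebra.Repr k ((rw' p).left t) (H × H)) :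
    (LinearMap.lTensor H (Δ₂ k H) ∘ₗ Coalgebra.comul) h
      = ∑ p ∈ r.index, ∑ t ∈ (rw' p).index, ∑ m ∈ (rz p t).index,
          r.left p ⊗ₜ[k] ((rz p t).left m ⊗ₜ[k]
            ((rz p t).right m ⊗ₜ[k] (rw' p).right t)) := by
  rw [LinearMap.comp_apply, ← r.eq, map_sum]
  refine Finset.sum_congr rfl fun p _ => ?_
  rw [LinearMap.lTensor_tmul, expand_left (r.right p) (rw' p) (rz p)]
  simp [TensorProduct.tmul_sum]

lemma sum_counit_smul (c : H) (rc : Coalgebra.Repr k c (H × H)) :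
    ∑ i ∈ rc.index, Coalgebra.counit (R := k) (rc.right i) • rc.left i = c := by
  have h := Coalgebra.sum_tmul_counit_eq (R := k) rc
  have h2 := congrArg (TensorProduct.rid k H) h
  rw [map_sum] at h2
  simp only [TensorProduct.rid_tmul, one_smul] at h2
  exact h2

noncomputable def Ψ : H ⊗[k] (H ⊗[k] (H ⊗[k] H)) →ₗ[k] H ⊗[k] H :=
  TensorProduct.map (LinearMap.mul' k H ∘ₗ (S k H).rTensor H)
      (LinearMap.mul' k H ∘ₗ (S k H).rTensor H)
    ∘ₗ (TensorProduct.tensorTensorTensorComm k H H H H).toLinearMap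
    ∘ₗ ((TensorProduct.comm k H H).toLinearMap).rTensor (H ⊗[k] H)
    ∘ₗ (TensorProduct.assoc k H H (H ⊗[k] H)).symm.toLinearMap

@[simp] lemma Ψ_tmul (x y z o : H) :
    Ψ (x ⊗ₜ[k] (y ⊗ₜ[k] (z ⊗ₜ[k] o))) = (S k H y * z) ⊗ₜ[k] (S k H x * o) := by
  simp [Ψ]

noncomputable def Gmap : H →ₗ[k] H ⊗[k] H :=
  TensorProduct.map (S k H) (S k H) ∘ₗ (TensorProduct.comm k H H).toLinearMap
    ∘ₗ Coalgebra.comul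

lemma conv_comul_antipode :
    conv (Coalgebra.comul : H →ₗ[k] H ⊗[k] H) (Coalgebra.comul ∘ₗ S k H) = convUnit := by
  apply LinearMap.ext; intro c
  rw [conv_apply_repr _ _ c (ℛ k c), convUnit_apply]
  have e : ∑ i ∈ (ℛ k c).index,
        Coalgebra.comul ((ℛ k c).left i) * (Coalgebra.comul ∘ₗ S k H) ((ℛ k c).right i)
      = Coalgebra.comul (R := k)
          (∑ i ∈ (ℛ k c).index,
            (ℛ k c).left i * S k H ((ℛ k c).right i)) := by
    rw [map_sum]
    refine Finset.sum_congr rfl fun i _ => ?_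
    rw [LinearMap.comp_apply, Bialgebra.comul_mul]
  have e' : ∑ i ∈ (ℛ k c).index, (ℛ k c).left i * S k H ((ℛ k c).right i)
      = algebraMap k H (Coalgebra.counit (R := k) c) := by
    rw [S_eq]; exact HopfAlgebra.sum_mul_antipode_eq_algebraMap_counit (ℛ k c)
  rw [e, e', Bialgebra.comul_algebraMap]

lemma conv_Gmap_comul :
    conv (Gmap : H →ₗ[k] H ⊗[k] H) Coalgebra.comul = convUnit := by
  apply LinearMap.ext; intro h
  let r : Coalgebra.Repr k h (H × H) := ℛ k h
  let rg : ∀ p : (H × H), Coalgebra.Repr k (r.left p) (H × H) := fun p => ℛ k (r.left p)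
  let rw' : ∀ p : (H × H), Coalgebra.Repr k (r.right p) (H × H) := fun p => ℛ k (r.right p)
  let ry : ∀ p : (H × H), ∀ q : (H × H), Coalgebra.Repr k ((rg p).right q) (H × H) :=
    fun p q => ℛ k ((rg p).right q)
  rw [conv_apply_repr _ _ h r, convUnit_apply]
  have step1 : ∀ p ∈ r.index,
      Gmap (r.left p) * Coalgebra.comul (r.right p)
        = ∑ q ∈ (rg p).index, ∑ t ∈ (rw' p).index,
            (S k H ((rg p).right q) * (rw' p).left t)
              ⊗ₜ[k] (S k H ((rg p).left q) * (rw' p).right t) := by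
    intro p _
    rw [Gmap, LinearMap.comp_apply, LinearMap.comp_apply, ← (rg p).eq, ← (rw' p).eq]
    rw [map_sum, map_sum, Finset.sum_mul_sum]
    simp [Algebra.TensorProduct.tmul_mul_tmul]
  rw [Finset.sum_congr rfl step1]
  have e1 : ∑ p ∈ r.index, ∑ q ∈ (rg p).index, ∑ t ∈ (rw' p).index,
        (S k H ((rg p).right q) * (rw' p).left t)
          ⊗ₜ[k] (S k H ((rg p).left q) * (rw' p).right t)
      = Ψ ((LinearMap.lTensor H (Δ₂ k H) ∘ₗ Coalgebra.comul) h) := by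
    rw [D4_form_A h r rg rw']
    simp [map_sum]
  rw [e1, D4_form_B h r rg ry, map_sum]
  have e2 : ∀ p ∈ r.index,
      Ψ (∑ q ∈ (rg p).index, ∑ n ∈ (ry p q).index,
          (rg p).left q ⊗ₜ[k] ((ry p q).left n ⊗ₜ[k] ((ry p q).right n ⊗ₜ[k] r.right p)))
        = (1 : H) ⊗ₜ[k] (S k H (r.left p) * r.right p) := by
    intro p _
    rw [map_sum]
    have inner : ∀ q ∈ (rg p).index,
        Ψ (∑ n ∈ (ry p q).index,
            (rg p).left q ⊗ₜ[k] ((ry p q).left n ⊗ₜ[k] ((ry p q).right n ⊗ₜ[k] r.right p)))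
          = Coalgebra.counit (R := k) ((rg p).right q)
              • ((1 : H) ⊗ₜ[k] (S k H ((rg p).left q) * r.right p)) := by
      intro q _
      rw [map_sum]
      have : ∀ n ∈ (ry p q).index,
          Ψ ((rg p).left q ⊗ₜ[k] ((ry p q).left n ⊗ₜ[k] ((ry p q).right n ⊗ₜ[k] r.right p)))
            = (S k H ((ry p q).left n) * (ry p q).right n)
                ⊗ₜ[k] (S k H ((rg p).left q) * r.right p) := fun n _ => Ψ_tmul _ _ _ _
      rw [Finset.sum_congr rfl this, ← TensorProduct.sum_tmul]
      rw [show ∑ n ∈ (ry p q).index, S k H ((ry p q).left n) * (ry p q).right n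
            = Coalgebra.counit (R := k) ((rg p).right q) • (1 : H) by
          rw [S_eq]; exact HopfAlgebra.sum_antipode_mul_eq_smul (ry p q)]
      rw [TensorProduct.smul_tmul']
    rw [Finset.sum_congr rfl inner]
    have : ∑ q ∈ (rg p).index,
        Coalgebra.counit (R := k) ((rg p).right q)
          • ((1 : H) ⊗ₜ[k] (S k H ((rg p).left q) * r.right p))
        = (1 : H) ⊗ₜ[k]
            (S k H (∑ q ∈ (rg p).index,
              Coalgebra.counit (R := k) ((rg p).right q) • (rg p).left q) * r.right p) := by
      rw [map_sum, Finset.sum_mul, TensorProduct.tmul_sum]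
      refine Finset.sum_congr rfl fun q _ => ?_
      rw [map_smul, smul_mul_assoc, TensorProduct.tmul_smul]
    rw [this, sum_counit_smul (r.left p) (rg p)]
  rw [Finset.sum_congr rfl e2, ← TensorProduct.tmul_sum]
  rw [show ∑ p ∈ r.index, S k H (r.left p) * r.right p
        = algebraMap k H (Coalgebra.counit (R := k) h) by
      rw [S_eq]; exact HopfAlgebra.sum_antipode_mul_eq_algebraMap_counit r]
  simp [Algebra.algebraMap_eq_smul_one, TensorProduct.tmul_smul,
    Algebra.TensorProduct.one_def]

lemma comul_antipode_comp :
    (Coalgebra.comul ∘ₗ S k H : H →ₗ[k] H ⊗[k] H) = Gmap := by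
  have h1 := conv_Gmap_comul (k := k) (H := H)
  have h2 := conv_comul_antipode (k := k) (H := H)
  exact (conv_left_cancel _ _ _ h1 h2).symm

lemma comul_antipode (c : H) :
    Coalgebra.comul (R := k) (S k H c)
      = TensorProduct.map (S k H) (S k H)
          ((TensorProduct.comm k H H) (Coalgebra.comul c)) := by
  have := LinearMap.congr_fun (comul_antipode_comp (k := k) (H := H)) c
  simpa [Gmap] using this

lemma D5_eq : LinearMap.lTensor H (LinearMap.lTensor H (Δ₂ k H)) ∘ₗ Δ₂ k H
    = LinearMap.lTensor H ((TensorProduct.assoc k H H (H ⊗[k] H)).toLinearMap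
        ∘ₗ TensorProduct.map (Coalgebra.comul (R := k) (A := H)) Coalgebra.comul)
        ∘ₗ Δ₂ k H := by
  have e : LinearMap.lTensor H (Δ₂ k H) ∘ₗ Coalgebra.comul
      = ((TensorProduct.assoc k H H (H ⊗[k] H)).toLinearMap
          ∘ₗ TensorProduct.map (Coalgebra.comul (R := k) (A := H)) Coalgebra.comul)
          ∘ₗ Coalgebra.comul := by
    rw [LinearMap.comp_assoc]; exact mapΔΔ.symm
  calc LinearMap.lTensor H (LinearMap.lTensor H (Δ₂ k H)) ∘ₗ Δ₂ k H
      = LinearMap.lTensor H (LinearMap.lTensor H (Δ₂ k H) ∘ₗ Coalgebra.comul)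
          ∘ₗ Coalgebra.comul := by
        rw [Δ₂_eq, LinearMap.lTensor_comp, ← LinearMap.comp_assoc,
          ← LinearMap.lTensor_comp]; try rfl
    _ = LinearMap.lTensor H (((TensorProduct.assoc k H H (H ⊗[k] H)).toLinearMap
          ∘ₗ TensorProduct.map (Coalgebra.comul (R := k) (A := H)) Coalgebra.comul)
          ∘ₗ Coalgebra.comul) ∘ₗ Coalgebra.comul := by rw [e]
    _ = LinearMap.lTensor H ((TensorProduct.assoc k H H (H ⊗[k] H)).toLinearMap
          ∘ₗ TensorProduct.map (Coalgebra.comul (R := k) (A := H)) Coalgebra.comul)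
          ∘ₗ Δ₂ k H := by
        rw [LinearMap.lTensor_comp, LinearMap.comp_assoc, ← Δ₂_eq]

lemma D5_form_X1 (h : H) (r : Coalgebra.Repr k h (H × H))
    (rg : ∀ p : (H × H), Coalgebra.Repr k (r.left p) (H × H))
    (rw' : ∀ p : (H × H), Coalgebra.Repr k (r.right p) (H × H))
    (rz : ∀ p : (H × H), ∀ t : (H × H), Coalgebra.Repr k ((rw' p).left t) (H × H)) :
    (LinearMap.lTensor H (LinearMap.lTensor H (Δ₂ k H)) ∘ₗ Δ₂ k H) h
      = ∑ p ∈ r.index, ∑ q ∈ (rg p).index, ∑ t ∈ (rw' p).index, ∑ m ∈ (rz p t).index,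
          (rg p).left q ⊗ₜ[k] ((rg p).right q ⊗ₜ[k]
            ((rz p t).left m ⊗ₜ[k] ((rz p t).right m ⊗ₜ[k] (rw' p).right t))) := by
  rw [LinearMap.comp_apply, expand_left h r rg, map_sum]
  refine Finset.sum_congr rfl fun p _ => ?_
  rw [map_sum]
  refine Finset.sum_congr rfl fun q _ => ?_
  rw [LinearMap.lTensor_tmul, LinearMap.lTensor_tmul,
    expand_left (r.right p) (rw' p) (rz p)]
  simp [TensorProduct.tmul_sum]

lemma D5_form_X2 (h : H) (r : Coalgebra.Repr k h (H × H))
    (rg : ∀ p : (H × H), Coalgebra.Repr k (r.left p) (H × H))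
    (ry : ∀ p : (H × H), ∀ q : (H × H), Coalgebra.Repr k ((rg p).right q) (H × H))
    (rw' : ∀ p : (H × H), Coalgebra.Repr k (r.right p) (H × H)) :
    (LinearMap.lTensor H (LinearMap.lTensor H (Δ₂ k H)) ∘ₗ Δ₂ k H) h
      = ∑ p ∈ r.index, ∑ q ∈ (rg p).index, ∑ n ∈ (ry p q).index, ∑ t ∈ (rw' p).index,
          (rg p).left q ⊗ₜ[k] ((ry p q).left n ⊗ₜ[k]
            ((ry p q).right n ⊗ₜ[k] ((rw' p).left t ⊗ₜ[k] (rw' p).right t))) := by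
  rw [D5_eq, LinearMap.comp_apply, expand_left h r rg, map_sum]
  refine Finset.sum_congr rfl fun p _ => ?_
  rw [map_sum]
  refine Finset.sum_congr rfl fun q _ => ?_
  rw [LinearMap.lTensor_tmul, LinearMap.comp_apply, TensorProduct.map_tmul,
    ← (ry p q).eq, ← (rw' p).eq]
  simp only [TensorProduct.sum_tmul, TensorProduct.tmul_sum, map_sum,
    LinearEquiv.coe_coe, TensorProduct.assoc_tmul, LinearMap.lTensor_tmul]
  rw [Finset.sum_comm]

section Maps

variable (χ : H ⊗[k] H →ₗ[k] k) (Vf : H →ₗ[k] k)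

noncomputable def Tmap : H ⊗[k] H →ₗ[k] k :=
  LinearMap.mul' k k ∘ₗ TensorProduct.map χ Vf
    ∘ₗ (TensorProduct.assoc k H H H).symm.toLinearMap
    ∘ₗ (LinearMap.mul' k H).rTensor (H ⊗[k] H)
    ∘ₗ (TensorProduct.assoc k H H (H ⊗[k] H)).symm.toLinearMap
    ∘ₗ LinearMap.lTensor H (LinearMap.lTensor H ((S k H).rTensor H))
    ∘ₗ LinearMap.lTensor H (Δ₂ k H)

lemma Tmap_tmul_of_rep (a h : H) {ι : Type*} (s : Finset ι) (p1 p2 p3 : ι → H)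
    (hrep : Δ₂ k H h = ∑ i ∈ s, p1 i ⊗ₜ[k] (p2 i ⊗ₜ[k] p3 i)) :
    Tmap χ Vf (a ⊗ₜ[k] h) = ∑ i ∈ s, χ ((a * p1 i) ⊗ₜ[k] S k H (p2 i)) * Vf (p3 i) := by
  rw [Tmap]
  simp only [LinearMap.comp_apply, LinearMap.lTensor_tmul]
  rw [hrep]
  simp [TensorProduct.tmul_sum, map_sum, TensorProduct.assoc_symm_tmul,
    LinearMap.rTensor_tmul, LinearMap.mul'_apply]

lemma Tmap_apply_repr (a h : H) (rc : Coalgebra.Repr k h (H × H))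
    (rL : ∀ i : (H × H), Coalgebra.Repr k (rc.left i) (H × H)) :
    Tmap χ Vf (a ⊗ₜ[k] h)
      = ∑ t ∈ rc.index, ∑ m ∈ (rL t).index,
          χ ((a * (rL t).left m) ⊗ₜ[k] S k H ((rL t).right m)) * Vf (rc.right t) := by
  rw [Tmap]
  simp only [LinearMap.comp_apply, LinearMap.lTensor_tmul]
  rw [expand_left h rc rL]
  simp [TensorProduct.tmul_sum, map_sum, TensorProduct.assoc_symm_tmul,
    LinearMap.rTensor_tmul, LinearMap.mul'_apply]

noncomputable def Θf (α β : H) : H ⊗[k] (H ⊗[k] (H ⊗[k] H)) →ₗ[k] k :=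
  LinearMap.mul' k k
    ∘ₗ TensorProduct.map (χ ∘ₗ TensorProduct.mk k H H α)
        (LinearMap.mul' k k
          ∘ₗ TensorProduct.map (χ ∘ₗ TensorProduct.map (LinearMap.mulLeft k β) (S k H)) Vf
          ∘ₗ (TensorProduct.assoc k H H H).symm.toLinearMap)

@[simp] lemma Θf_tmul (α β p q u v : H) :
    Θf χ Vf α β (p ⊗ₜ[k] (q ⊗ₜ[k] (u ⊗ₜ[k] v)))
      = χ (α ⊗ₜ[k] p) * (χ ((β * q) ⊗ₜ[k] S k H u) * Vf v) := by
  simp [Θf]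

noncomputable def Ξ3 : H ⊗[k] (H ⊗[k] H) →ₗ[k] k :=
  LinearMap.mul' k k
    ∘ₗ TensorProduct.map (χ ∘ₗ (S k H).lTensor H) Vf
    ∘ₗ (TensorProduct.assoc k H H H).symm.toLinearMap

@[simp] lemma Ξ3_tmul (p q v : H) :
    Ξ3 χ Vf (p ⊗ₜ[k] (q ⊗ₜ[k] v)) = χ (p ⊗ₜ[k] S k H q) * Vf v := by
  simp [Ξ3]

noncomputable def Ξ5 (a : H) : H ⊗[k] (H ⊗[k] (H ⊗[k] (H ⊗[k] H))) →ₗ[k] k :=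
  (LinearMap.mul' k k ∘ₗ TensorProduct.map (χ ∘ₗ TensorProduct.mk k H H a) LinearMap.id)
    ∘ₗ (Ξ3 χ Vf).lTensor H
    ∘ₗ (TensorProduct.leftComm k H H (H ⊗[k] H)).toLinearMap
    ∘ₗ LinearMap.lTensor H
        ((LinearMap.mul' k H ∘ₗ (S k H).lTensor H).rTensor (H ⊗[k] H))
    ∘ₗ LinearMap.lTensor H (TensorProduct.assoc k H H (H ⊗[k] H)).symm.toLinearMap

@[simp] lemma Ξ5_tmul (a p q u w v : H) :
    Ξ5 χ Vf a (p ⊗ₜ[k] (q ⊗ₜ[k] (u ⊗ₜ[k] (w ⊗ₜ[k] v))))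
      = χ (a ⊗ₜ[k] (q * S k H u)) * (χ (p ⊗ₜ[k] S k H w) * Vf v) := by
  simp [Ξ5]

end Maps

lemma counit_tmul (a h : H) :
    Coalgebra.counit (R := k) (a ⊗ₜ[k] h)
      = Coalgebra.counit (R := k) a * Coalgebra.counit (R := k) h := by
  rw [TensorProduct.counit_def]
  simp [mul_comm]

lemma comul_tmul (a h : H) :
    Coalgebra.comul (R := k) (a ⊗ₜ[k] h)
      = TensorProduct.tensorTensorTensorComm k H H H H
          (TensorProduct.map Coalgebra.comul Coalgebra.comul (a ⊗ₜ[k] h)) := by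
  rw [TensorProduct.comul_def]
  rfl

lemma conv_tmul (F G : H ⊗[k] H →ₗ[k] k) (a h : H)
    (ra : Coalgebra.Repr k a (H × H)) (rh : Coalgebra.Repr k h (H × H)) :
    conv F G (a ⊗ₜ[k] h)
      = ∑ i ∈ ra.index, ∑ j ∈ rh.index,
          F (ra.left i ⊗ₜ[k] rh.left j) * G (ra.right i ⊗ₜ[k] rh.right j) := by
  rw [conv, LinearMap.comp_apply, LinearMap.comp_apply, comul_tmul,
    TensorProduct.map_tmul, ← ra.eq, ← rh.eq]
  simp only [TensorProduct.sum_tmul, TensorProduct.tmul_sum, map_sum,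
    TensorProduct.tensorTensorTensorComm_tmul, LinearMap.mul'_apply,
    TensorProduct.map_tmul]
  rw [Finset.sum_comm]

lemma convUnit_tmul (a h : H) :
    (convUnit : H ⊗[k] H →ₗ[k] k) (a ⊗ₜ[k] h)
      = Coalgebra.counit (R := k) a * Coalgebra.counit (R := k) h := by
  rw [convUnit_apply, counit_tmul]
  simp [Algebra.algebraMap_self]

section Key

variable (χ χ' : H ⊗[k] H →ₗ[k] k) (Vf : H →ₗ[k] k)

lemma conv_chi'_chi (hχ : IsFunCocycle k H χ χ') :
    conv χ' χ = (convUnit : H ⊗[k] H →ₗ[k] k) := by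
  apply TensorProduct.ext'
  intro a h
  rw [conv_tmul χ' χ a h (ℛ k a) (ℛ k h), convUnit_tmul]
  exact (hχ.1 a h (H × H) (H × H) (ℛ k a).index (ℛ k h).index
    (ℛ k a).left (ℛ k a).right (ℛ k h).left (ℛ k h).right
    (ℛ k a).eq.symm (ℛ k h).eq.symm).2

lemma conv_chi_T (hχ : IsFunCocycle k H χ χ')
    (hVf : ∀ (h : H) (ι : Type) (s : Finset ι) (h1 h2 : ι → H),
      Δ k H h = ∑ i ∈ s, h1 i ⊗ₜ[k] h2 i →
      (∑ i ∈ s, (χ ∘ₗ (LinearMap.lTensor H (S k H)) ∘ₗ (Δ k H)) (h1 i) * Vf (h2 i)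
          = ε k H h ∧
       ∑ i ∈ s, Vf (h1 i) * (χ ∘ₗ (LinearMap.lTensor H (S k H)) ∘ₗ (Δ k H)) (h2 i)
          = ε k H h)) :
    conv χ (Tmap χ Vf) = (convUnit : H ⊗[k] H →ₗ[k] k) := by
  apply TensorProduct.ext'
  intro a h
  let ra : Coalgebra.Repr k a (H × H) := ℛ k a
  let r : Coalgebra.Repr k h (H × H) := ℛ k h
  let rg : ∀ p : (H × H), Coalgebra.Repr k (r.left p) (H × H) := fun p => ℛ k (r.left p)
  let rw' : ∀ p : (H × H), Coalgebra.Repr k (r.right p) (H × H) := fun p => ℛ k (r.right p)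
  let ry : ∀ p : (H × H), ∀ q : (H × H), Coalgebra.Repr k ((rg p).right q) (H × H) :=
    fun p q => ℛ k ((rg p).right q)
  let rz : ∀ p : (H × H), ∀ t : (H × H), Coalgebra.Repr k ((rw' p).left t) (H × H) :=
    fun p t => ℛ k ((rw' p).left t)
  rw [conv_tmul χ (Tmap χ Vf) a h ra r, convUnit_tmul]
  -- Step 1: expand Tmap and regroup via Θf
  have hA : ∀ α β : H,
      Θf χ Vf α β ((LinearMap.lTensor H (Δ₂ k H) ∘ₗ Coalgebra.comul) h)
        = ∑ p ∈ r.index, ∑ t ∈ (rw' p).index, ∑ m ∈ (rz p t).index,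
            χ (α ⊗ₜ[k] r.left p)
              * (χ ((β * (rz p t).left m) ⊗ₜ[k] S k H ((rz p t).right m))
                  * Vf ((rw' p).right t)) := by
    intro α β
    rw [D4_form_Y1 h r rw' rz]
    simp [map_sum]
  have hB : ∀ α β : H,
      Θf χ Vf α β ((LinearMap.lTensor H (Δ₂ k H) ∘ₗ Coalgebra.comul) h)
        = ∑ p ∈ r.index, ∑ q ∈ (rg p).index, ∑ t ∈ (rw' p).index,
            χ (α ⊗ₜ[k] (rg p).left q)
              * (χ ((β * (rg p).right q) ⊗ₜ[k] S k H ((rw' p).left t))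
                  * Vf ((rw' p).right t)) := by
    intro α β
    rw [D4_form_A h r rg rw']
    simp [map_sum]
  have step1 : ∀ i ∈ ra.index,
      ∑ p ∈ r.index, χ (ra.left i ⊗ₜ[k] r.left p) * Tmap χ Vf (ra.right i ⊗ₜ[k] r.right p)
        = ∑ p ∈ r.index, ∑ q ∈ (rg p).index, ∑ t ∈ (rw' p).index,
            χ (ra.left i ⊗ₜ[k] (rg p).left q)
              * (χ ((ra.right i * (rg p).right q) ⊗ₜ[k] S k H ((rw' p).left t))
                  * Vf ((rw' p).right t)) := by
    intro i _
    rw [← hB (ra.left i) (ra.right i), hA (ra.left i) (ra.right i)]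
    refine Finset.sum_congr rfl fun p _ => ?_
    rw [Tmap_apply_repr χ Vf (ra.right i) (r.right p) (rw' p) (rz p), Finset.mul_sum]
    exact Finset.sum_congr rfl fun t _ => Finset.mul_sum _ _ _
  rw [Finset.sum_congr rfl step1]
  -- Step 2: reorder sums to isolate the cocycle double sum
  have step2 :
      ∑ i ∈ ra.index, ∑ p ∈ r.index, ∑ q ∈ (rg p).index, ∑ t ∈ (rw' p).index,
          χ (ra.left i ⊗ₜ[k] (rg p).left q)
            * (χ ((ra.right i * (rg p).right q) ⊗ₜ[k] S k H ((rw' p).left t))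
                * Vf ((rw' p).right t))
        = ∑ p ∈ r.index, ∑ t ∈ (rw' p).index,
            (∑ i ∈ ra.index, ∑ q ∈ (rg p).index,
              χ (ra.left i ⊗ₜ[k] (rg p).left q)
                * χ ((ra.right i * (rg p).right q) ⊗ₜ[k] S k H ((rw' p).left t)))
              * Vf ((rw' p).right t) := by
    rw [Finset.sum_comm]
    refine Finset.sum_congr rfl fun p _ => ?_
    have swap1 : ∀ i ∈ ra.index,
        ∑ q ∈ (rg p).index, ∑ t ∈ (rw' p).index,
            χ (ra.left i ⊗ₜ[k] (rg p).left q)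
              * (χ ((ra.right i * (rg p).right q) ⊗ₜ[k] S k H ((rw' p).left t))
                  * Vf ((rw' p).right t))
          = ∑ t ∈ (rw' p).index, ∑ q ∈ (rg p).index,
              χ (ra.left i ⊗ₜ[k] (rg p).left q)
                * (χ ((ra.right i * (rg p).right q) ⊗ₜ[k] S k H ((rw' p).left t))
                    * Vf ((rw' p).right t)) := fun i _ => Finset.sum_comm
    rw [Finset.sum_congr rfl swap1, Finset.sum_comm]
    refine Finset.sum_congr rfl fun t _ => ?_
    rw [Finset.sum_mul]
    refine Finset.sum_congr rfl fun i _ => ?_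
    rw [Finset.sum_mul]
    refine Finset.sum_congr rfl fun q _ => ?_
    ring
  rw [step2]
  -- Step 3: apply the cocycle identity
  have step3 : ∀ p ∈ r.index, ∀ t ∈ (rw' p).index,
      ∑ i ∈ ra.index, ∑ q ∈ (rg p).index,
          χ (ra.left i ⊗ₜ[k] (rg p).left q)
            * χ ((ra.right i * (rg p).right q) ⊗ₜ[k] S k H ((rw' p).left t))
        = ∑ q ∈ (rg p).index, ∑ m ∈ (rz p t).index,
            χ ((rg p).left q ⊗ₜ[k] S k H ((rz p t).right m))
              * χ (a ⊗ₜ[k] ((rg p).right q * S k H ((rz p t).left m))) := by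
    intro p _ t _
    have hf : Δ k H (S k H ((rw' p).left t))
        = ∑ m ∈ (rz p t).index,
            S k H ((rz p t).right m) ⊗ₜ[k] S k H ((rz p t).left m) := by
      rw [Δ_eq, comul_antipode, ← (rz p t).eq]
      simp [map_sum]
    exact (hχ.2.1 a (r.left p) (S k H ((rw' p).left t)) (H × H) (H × H) (H × H)
      ra.index (rg p).index (rz p t).index ra.left ra.right (rg p).left (rg p).right
      _ _ ra.eq.symm (rg p).eq.symm hf).symm
  rw [Finset.sum_congr rfl fun p hp => Finset.sum_congr rfl fun t ht =>
    congrArg (· * Vf ((rw' p).right t)) (step3 p hp t ht)]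
  -- Step 4: recognize as Ξ5 applied to the 5-fold coproduct, and regroup
  have hX1 : Ξ5 χ Vf a ((LinearMap.lTensor H (LinearMap.lTensor H (Δ₂ k H)) ∘ₗ Δ₂ k H) h)
      = ∑ p ∈ r.index, ∑ q ∈ (rg p).index, ∑ t ∈ (rw' p).index, ∑ m ∈ (rz p t).index,
          χ (a ⊗ₜ[k] ((rg p).right q * S k H ((rz p t).left m)))
            * (χ ((rg p).left q ⊗ₜ[k] S k H ((rz p t).right m))
                * Vf ((rw' p).right t)) := by
    rw [D5_form_X1 h r rg rw' rz]
    simp [map_sum]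
  have hX2 : Ξ5 χ Vf a ((LinearMap.lTensor H (LinearMap.lTensor H (Δ₂ k H)) ∘ₗ Δ₂ k H) h)
      = ∑ p ∈ r.index, ∑ q ∈ (rg p).index, ∑ n ∈ (ry p q).index, ∑ t ∈ (rw' p).index,
          χ (a ⊗ₜ[k] ((ry p q).left n * S k H ((ry p q).right n)))
            * (χ ((rg p).left q ⊗ₜ[k] S k H ((rw' p).left t))
                * Vf ((rw' p).right t)) := by
    rw [D5_form_X2 h r rg ry rw']
    simp [map_sum]
  have step4 :
      ∑ p ∈ r.index, ∑ t ∈ (rw' p).index,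
          (∑ q ∈ (rg p).index, ∑ m ∈ (rz p t).index,
            χ ((rg p).left q ⊗ₜ[k] S k H ((rz p t).right m))
              * χ (a ⊗ₜ[k] ((rg p).right q * S k H ((rz p t).left m))))
            * Vf ((rw' p).right t)
        = Ξ5 χ Vf a ((LinearMap.lTensor H (LinearMap.lTensor H (Δ₂ k H)) ∘ₗ Δ₂ k H) h) := by
    rw [hX1]
    refine Finset.sum_congr rfl fun p _ => ?_
    have swap2 :
        ∑ t ∈ (rw' p).index,
            (∑ q ∈ (rg p).index, ∑ m ∈ (rz p t).index,
              χ ((rg p).left q ⊗ₜ[k] S k H ((rz p t).right m))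
                * χ (a ⊗ₜ[k] ((rg p).right q * S k H ((rz p t).left m))))
              * Vf ((rw' p).right t)
          = ∑ t ∈ (rw' p).index, ∑ q ∈ (rg p).index, ∑ m ∈ (rz p t).index,
              χ (a ⊗ₜ[k] ((rg p).right q * S k H ((rz p t).left m)))
                * (χ ((rg p).left q ⊗ₜ[k] S k H ((rz p t).right m))
                    * Vf ((rw' p).right t)) := by
      refine Finset.sum_congr rfl fun t _ => ?_
      rw [Finset.sum_mul]
      refine Finset.sum_congr rfl fun q _ => ?_
      rw [Finset.sum_mul]
      refine Finset.sum_congr rfl fun m _ => ?_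
      ring
    rw [swap2, Finset.sum_comm]
  rw [step4, hX2]
  -- Step 5: contract the middle antipode pair
  have step5 : ∀ p ∈ r.index, ∀ q ∈ (rg p).index,
      ∑ n ∈ (ry p q).index, ∑ t ∈ (rw' p).index,
          χ (a ⊗ₜ[k] ((ry p q).left n * S k H ((ry p q).right n)))
            * (χ ((rg p).left q ⊗ₜ[k] S k H ((rw' p).left t))
                * Vf ((rw' p).right t))
        = (Coalgebra.counit (R := k) ((rg p).right q) * Coalgebra.counit (R := k) a)
            * ∑ t ∈ (rw' p).index,
                χ ((rg p).left q ⊗ₜ[k] S k H ((rw' p).left t)) * Vf ((rw' p).right t) := by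
    intro p _ q _
    have hsum : ∑ n ∈ (ry p q).index,
        χ (a ⊗ₜ[k] ((ry p q).left n * S k H ((ry p q).right n)))
          = Coalgebra.counit (R := k) ((rg p).right q) * Coalgebra.counit (R := k) a := by
      have e0 : ∑ n ∈ (ry p q).index, (ry p q).left n * S k H ((ry p q).right n)
          = Coalgebra.counit (R := k) ((rg p).right q) • (1 : H) := by
        rw [S_eq]; exact HopfAlgebra.sum_mul_antipode_eq_smul (ry p q)
      calc ∑ n ∈ (ry p q).index,
            χ (a ⊗ₜ[k] ((ry p q).left n * S k H ((ry p q).right n)))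
          = χ (a ⊗ₜ[k] (∑ n ∈ (ry p q).index,
              (ry p q).left n * S k H ((ry p q).right n))) := by
            rw [TensorProduct.tmul_sum, map_sum]
        _ = Coalgebra.counit (R := k) ((rg p).right q) * χ (a ⊗ₜ[k] (1 : H)) := by
            rw [e0, TensorProduct.tmul_smul, map_smul, smul_eq_mul]
        _ = Coalgebra.counit (R := k) ((rg p).right q) * Coalgebra.counit (R := k) a := by
            rw [(hχ.2.2 a).2, ε_eq]
    calc ∑ n ∈ (ry p q).index, ∑ t ∈ (rw' p).index,
          χ (a ⊗ₜ[k] ((ry p q).left n * S k H ((ry p q).right n)))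
            * (χ ((rg p).left q ⊗ₜ[k] S k H ((rw' p).left t)) * Vf ((rw' p).right t))
        = ∑ n ∈ (ry p q).index,
            χ (a ⊗ₜ[k] ((ry p q).left n * S k H ((ry p q).right n)))
              * ∑ t ∈ (rw' p).index,
                  χ ((rg p).left q ⊗ₜ[k] S k H ((rw' p).left t)) * Vf ((rw' p).right t) := by
          refine Finset.sum_congr rfl fun n _ => ?_
          rw [Finset.mul_sum]
      _ = _ := by rw [← Finset.sum_mul, hsum]
  rw [Finset.sum_congr rfl fun p hp => Finset.sum_congr rfl (step5 p hp)]
  -- Step 6: contract the counit weights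
  have step6 : ∀ p ∈ r.index,
      ∑ q ∈ (rg p).index,
          (Coalgebra.counit (R := k) ((rg p).right q) * Coalgebra.counit (R := k) a)
            * ∑ t ∈ (rw' p).index,
                χ ((rg p).left q ⊗ₜ[k] S k H ((rw' p).left t)) * Vf ((rw' p).right t)
        = Coalgebra.counit (R := k) a
            * ∑ t ∈ (rw' p).index,
                χ (r.left p ⊗ₜ[k] S k H ((rw' p).left t)) * Vf ((rw' p).right t) := by
    intro p _
    have hq : ∀ t ∈ (rw' p).index,
        ∑ q ∈ (rg p).index,
            Coalgebra.counit (R := k) ((rg p).right q)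
              * χ ((rg p).left q ⊗ₜ[k] S k H ((rw' p).left t))
          = χ (r.left p ⊗ₜ[k] S k H ((rw' p).left t)) := by
      intro t _
      calc ∑ q ∈ (rg p).index,
            Coalgebra.counit (R := k) ((rg p).right q)
              * χ ((rg p).left q ⊗ₜ[k] S k H ((rw' p).left t))
          = χ ((∑ q ∈ (rg p).index,
              Coalgebra.counit (R := k) ((rg p).right q) • (rg p).left q)
                ⊗ₜ[k] S k H ((rw' p).left t)) := by
            rw [TensorProduct.sum_tmul, map_sum]
            refine Finset.sum_congr rfl fun q _ => ?_
            rw [← TensorProduct.smul_tmul', map_smul, smul_eq_mul]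
        _ = χ (r.left p ⊗ₜ[k] S k H ((rw' p).left t)) := by
            rw [sum_counit_smul (r.left p) (rg p)]
    calc ∑ q ∈ (rg p).index,
          (Coalgebra.counit (R := k) ((rg p).right q) * Coalgebra.counit (R := k) a)
            * ∑ t ∈ (rw' p).index,
                χ ((rg p).left q ⊗ₜ[k] S k H ((rw' p).left t)) * Vf ((rw' p).right t)
        = ∑ q ∈ (rg p).index, ∑ t ∈ (rw' p).index,
            (Coalgebra.counit (R := k) ((rg p).right q) * Coalgebra.counit (R := k) a)
              * (χ ((rg p).left q ⊗ₜ[k] S k H ((rw' p).left t)) * Vf ((rw' p).right t)) := by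
          exact Finset.sum_congr rfl fun q _ => Finset.mul_sum _ _ _
      _ = ∑ t ∈ (rw' p).index, ∑ q ∈ (rg p).index,
            (Coalgebra.counit (R := k) ((rg p).right q) * Coalgebra.counit (R := k) a)
              * (χ ((rg p).left q ⊗ₜ[k] S k H ((rw' p).left t)) * Vf ((rw' p).right t)) := by
          rw [Finset.sum_comm]
      _ = ∑ t ∈ (rw' p).index, Coalgebra.counit (R := k) a
            * ((∑ q ∈ (rg p).index,
                Coalgebra.counit (R := k) ((rg p).right q)
                  * χ ((rg p).left q ⊗ₜ[k] S k H ((rw' p).left t)))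
              * Vf ((rw' p).right t)) := by
          refine Finset.sum_congr rfl fun t _ => ?_
          rw [Finset.sum_mul, Finset.mul_sum]
          refine Finset.sum_congr rfl fun q _ => ?_
          ring
      _ = ∑ t ∈ (rw' p).index, Coalgebra.counit (R := k) a
            * (χ (r.left p ⊗ₜ[k] S k H ((rw' p).left t)) * Vf ((rw' p).right t)) := by
          refine Finset.sum_congr rfl fun t ht => ?_
          rw [hq t ht]
      _ = Coalgebra.counit (R := k) a
            * ∑ t ∈ (rw' p).index,
                χ (r.left p ⊗ₜ[k] S k H ((rw' p).left t)) * Vf ((rw' p).right t) := by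
          rw [Finset.mul_sum]
  rw [Finset.sum_congr rfl step6, ← Finset.mul_sum]
  -- Step 7: conclude with the convolution inverse property of Vf
  have h7a : ∑ p ∈ r.index, ∑ t ∈ (rw' p).index,
        χ (r.left p ⊗ₜ[k] S k H ((rw' p).left t)) * Vf ((rw' p).right t)
      = Ξ3 χ Vf (Δ₂ k H h) := by
    rw [expand_right h r rw']
    simp [map_sum]
  have h7b : Ξ3 χ Vf (Δ₂ k H h)
      = ∑ p ∈ r.index, ∑ q ∈ (rg p).index,
          χ ((rg p).left q ⊗ₜ[k] S k H ((rg p).right q)) * Vf (r.right p) := by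
    rw [expand_left h r rg]
    simp [map_sum]
  have h7c : ∀ p : (H × H),
      (χ ∘ₗ (LinearMap.lTensor H (S k H)) ∘ₗ (Δ k H)) (r.left p)
        = ∑ q ∈ (rg p).index,
            χ ((rg p).left q ⊗ₜ[k] S k H ((rg p).right q)) := by
    intro p
    rw [LinearMap.comp_apply, LinearMap.comp_apply,
      show (Δ k H) (r.left p) = ∑ q ∈ (rg p).index, (rg p).left q ⊗ₜ[k] (rg p).right q
        from (rg p).eq.symm]
    simp [map_sum]
  have h7d := (hVf h (H × H) r.index r.left r.right r.eq.symm).1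
  rw [h7a, h7b]
  rw [show ∑ p ∈ r.index, ∑ q ∈ (rg p).index,
        χ ((rg p).left q ⊗ₜ[k] S k H ((rg p).right q)) * Vf (r.right p)
      = ∑ p ∈ r.index,
          (χ ∘ₗ (LinearMap.lTensor H (S k H)) ∘ₗ (Δ k H)) (r.left p) * Vf (r.right p)
    from Finset.sum_congr rfl fun p _ => by rw [h7c p, Finset.sum_mul]]
  rw [h7d, ε_eq]

end Key

end Hopf

end StTen

namespace StTen

variable {k H : Type} [Field k] [Ring H] [HopfAlgebra k H]

lemma chi'_eq_Tmap (χ χ' : H ⊗[k] H →ₗ[k] k) (Vf : H →ₗ[k] k)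
    (hχ : IsFunCocycle k H χ χ')
    (hVf : ∀ (h : H) (ι : Type) (s : Finset ι) (h1 h2 : ι → H),
      Δ k H h = ∑ i ∈ s, h1 i ⊗ₜ[k] h2 i →
      (∑ i ∈ s, (χ ∘ₗ (LinearMap.lTensor H (S k H)) ∘ₗ (Δ k H)) (h1 i) * Vf (h2 i)
          = ε k H h ∧
       ∑ i ∈ s, Vf (h1 i) * (χ ∘ₗ (LinearMap.lTensor H (S k H)) ∘ₗ (Δ k H)) (h2 i)
          = ε k H h)) :
    χ' = Tmap χ Vf :=
  conv_left_cancel χ χ' (Tmap χ Vf) (conv_chi'_chi χ χ' hχ) (conv_chi_T χ χ' Vf hχ hVf)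

end StTen



/-- Let `χ : H ⊗ H → k` be a unital 2-cocycle with convolution inverse
`χ'`, let `U(h) = χ(h₁ ⊗ S h₂)` and let `Vf` be a convolution inverse of `U`. Then for all
`a, h ∈ H`: `χ(a·h₁ ⊗ S h₂)·Vf(h₃) = χ⁻¹(a ⊗ h)`. -/
theorem statement_10
    {k H : Type} [Field k] [Ring H] [HopfAlgebra k H]
    (hS : Function.Bijective (S k H))
    (χ χ' : H ⊗[k] H →ₗ[k] k) (hχ : IsFunCocycle k H χ χ')
    (Vf : H →ₗ[k] k)
    (hVf : ∀ (h : H) (ι : Type) (s : Finset ι) (h1 h2 : ι → H),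
      Δ k H h = ∑ i ∈ s, h1 i ⊗ₜ[k] h2 i →
      (∑ i ∈ s, (χ ∘ₗ (LinearMap.lTensor H (S k H)) ∘ₗ (Δ k H)) (h1 i) * Vf (h2 i)
          = ε k H h ∧
       ∑ i ∈ s, Vf (h1 i) * (χ ∘ₗ (LinearMap.lTensor H (S k H)) ∘ₗ (Δ k H)) (h2 i)
          = ε k H h)) :
    ∀ (a h : H) (ι : Type) (s : Finset ι) (p1 p2 p3 : ι → H),
      Δ₂ k H h = ∑ i ∈ s, p1 i ⊗ₜ[k] (p2 i ⊗ₜ[k] p3 i) →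
      ∑ i ∈ s, χ ((a * p1 i) ⊗ₜ[k] S k H (p2 i)) * Vf (p3 i) = χ' (a ⊗ₜ[k] h) := by
  intro a h ι s p1 p2 p3 hrep
  rw [StTen.chi'_eq_Tmap χ χ' Vf hχ hVf]
  exact (StTen.Tmap_tmul_of_rep χ Vf a h s p1 p2 p3 hrep).symm
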